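/- Fix an integer k ≥ 1 and write ĥ(n, x) = Wr[H_k, H_{n−k+1}](x) for the 1-step exceptional Hermite polynomial of degree n (so ĥ(n,·) = 0 when n − k + 1 < 0 or n = 2k − 1). Then for every integer n with n ≥ k − 1 and n ≠ 2k − 1, and every x ∈ ℝ: H_{k+1}(x) · ĥ(n, x) = (n − 2k + 1) Σ_{j=0}^{k+1} 2^j · C(k+1, j) · (n + 3 − k − j)_{j−1} · ĥ(n + k + 1 − 2j, x), where C(k+1, j) is the binomial coefficient and (X)_m = X(X+1)⋯(X+m−1) is the Pochhammer symbol with the convention (X)_{−1} = 1/(X−1) (note n + 2 − k ≥ 1 for the j = 0 term). -/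

import Mathlib

noncomputable section

/-- Physicists' Hermite polynomials indexed by naturals. -/
def hermN : ℕ → Polynomial ℝ
  | 0 => 1
  | 1 => Polynomial.C 2 * Polynomial.X
  | (n + 2) => Polynomial.C 2 * Polynomial.X * hermN (n + 1)
      - Polynomial.C (2 * ((n : ℝ) + 1)) * hermN n

/-- Physicists' Hermite polynomials indexed by integers, `0` for negative index. -/
def Herm (n : ℤ) : Polynomial ℝ := if 0 ≤ n then hermN n.toNat else 0

/-- Hermite polynomial as a real function. -/
def H (n : ℤ) : ℝ → ℝ := fun x => (Herm n).eval x

/-- The Wronskian determinant of a finite family of functions. -/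
def Wr {m : ℕ} (f : Fin m → ℝ → ℝ) (x : ℝ) : ℝ :=
  Matrix.det (Matrix.of fun i j : Fin m => iteratedDeriv (j : ℕ) (f i) x)

/-- The Pochhammer symbol `(X)_m = X(X+1)⋯(X+m-1)`, with the convention
`(X)_(-1) = 1/(X-1)`. -/
def pochI (X : ℝ) (m : ℤ) : ℝ :=
  if m = -1 then 1 / (X - 1) else ∏ i ∈ Finset.range m.toNat, (X + i)

/-- The 1-step exceptional Hermite polynomial `ĥ(n,x) = Wr[H_k, H_(n-k+1)](x)`. -/
def hh1 (k : ℕ) (n : ℤ) : ℝ → ℝ := fun x => Wr ![H (k : ℤ), H (n - k + 1)] x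

open Polynomial Finset

lemma Herm_natCast (a : ℕ) : Herm (a : ℤ) = hermN a := by simp [Herm]

lemma Herm_neg {n : ℤ} (h : n < 0) : Herm n = 0 := by simp [Herm, not_le.mpr h]

lemma herm_rec (s : ℤ) (hs : 0 ≤ s) :
    C 2 * X * Herm s = Herm (s + 1) + C (2 * (s : ℝ)) * Herm (s - 1) := by
  obtain ⟨t, rfl⟩ := Int.eq_ofNat_of_zero_le hs
  cases t with
  | zero =>
    simp only [Int.natCast_zero, Herm_neg (by norm_num : (0:ℤ) - 1 < 0)]
    rw [show (0:ℤ) = ((0:ℕ):ℤ) from rfl, Herm_natCast,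
      show ((0:ℕ):ℤ) + 1 = ((1:ℕ):ℤ) from rfl, Herm_natCast]
    simp [hermN]
  | succ u =>
    have h1 : ((u + 1 : ℕ) : ℤ) + 1 = ((u + 2 : ℕ) : ℤ) := by push_cast; ring
    have h2 : ((u + 1 : ℕ) : ℤ) - 1 = ((u : ℕ) : ℤ) := by push_cast; ring
    rw [h1, h2, Herm_natCast, Herm_natCast, Herm_natCast]
    have h3 : hermN (u + 2) = C 2 * X * hermN (u + 1) - C (2 * ((u : ℝ) + 1)) * hermN u := rfl
    rw [h3]
    push_cast
    ring

lemma hermN_deriv (a : ℕ) :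
    (hermN a).derivative = C (2 * (a : ℝ)) * Herm ((a : ℤ) - 1) := by
  induction a using Nat.twoStepInduction with
  | zero => simp [hermN, Herm_neg, show ((0:ℕ):ℤ) - 1 < 0 by norm_num]
  | one =>
    have h1 : hermN 1 = C 2 * X := rfl
    rw [h1, show ((1:ℕ):ℤ) - 1 = ((0:ℕ):ℤ) from rfl, Herm_natCast]
    simp [hermN]
  | more u ih1 ih2 =>
    have h : hermN (u + 2) = C 2 * X * hermN (u + 1) - C (2 * ((u : ℝ) + 1)) * hermN u := rfl
    rw [h]
    simp only [derivative_sub, derivative_mul, derivative_C, derivative_X, ih1, ih2]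
    have e1 : ((u + 1 : ℕ) : ℤ) - 1 = ((u : ℕ) : ℤ) := by push_cast; ring
    rw [e1, Herm_natCast]
    have e3 : ((u + 2 : ℕ) : ℤ) - 1 = ((u + 1 : ℕ) : ℤ) := by push_cast; ring
    rw [e3, Herm_natCast]
    have hr := herm_rec (u : ℤ) (by positivity)
    rw [show ((u:ℕ):ℤ) + 1 = ((u+1:ℕ):ℤ) by push_cast; ring, Herm_natCast] at hr
    push_cast
    push_cast at hr
    rw [show Herm ((u:ℤ)+1) = hermN (u+1) by
      rw [show ((u:ℤ)+1) = ((u+1:ℕ):ℤ) by push_cast; ring, Herm_natCast]] at hr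
    simp only [map_mul, map_add, map_one, map_ofNat] at *
    linear_combination (2 * C (u:ℝ) + 2) * hr

lemma choose_real1 (b j : ℕ) :
    ((j:ℝ)+1) * ((b.choose (j+1) : ℕ) : ℝ) = ((b:ℝ) - j) * (b.choose j : ℝ) := by
  rcases le_or_gt (j+1) b with h | h
  · have := Nat.choose_succ_right_eq b j
    have hc : ((b.choose (j+1) * (j+1) : ℕ) : ℝ) = ((b.choose j * (b - j) : ℕ) : ℝ) := by
      rw [this]
    push_cast [Nat.cast_sub (by omega : j ≤ b)] at hc
    linarith
  · rcases le_or_gt j b with h2 | h2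
    · have hb : b = j := by omega
      subst hb
      simp [Nat.choose_succ_self]
    · simp [Nat.choose_eq_zero_of_lt h, Nat.choose_eq_zero_of_lt h2]

lemma choose_real2 (a i : ℕ) :
    ((a:ℝ)+1) * (a.choose i : ℝ) = ((a:ℝ) + 1 - i) * ((a+1).choose i : ℝ) := by
  rcases le_or_gt i (a+1) with h | h
  · have := Nat.choose_mul_succ_eq a i
    have hc : ((a.choose i * (a+1) : ℕ) : ℝ) = (((a+1).choose i * (a + 1 - i) : ℕ) : ℝ) := by
      rw [this]
    push_cast [Nat.cast_sub h] at hc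
    linarith
  · simp [Nat.choose_eq_zero_of_lt h, Nat.choose_eq_zero_of_lt (by omega : a < i)]

lemma pascal_real (a j : ℕ) :
    (((a+2).choose (j+1) : ℕ) : ℝ) = ((a+1).choose (j+1) : ℝ) + ((a+1).choose j : ℝ) := by
  rw [Nat.choose_succ_succ (a+1) j]
  push_cast; ring

lemma coef_identity (a b j : ℕ) :
    (2:ℝ)^(j+1) * ((j+1).factorial : ℝ) * ((a+2).choose (j+1) : ℝ) * (b.choose (j+1) : ℝ)
    = (2:ℝ)^(j+1) * ((j+1).factorial : ℝ) * ((a+1).choose (j+1) : ℝ) * (b.choose (j+1) : ℝ)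
      + 2 * ((a:ℝ) + b + 1 - 2*j) *
          ((2:ℝ)^j * (j.factorial : ℝ) * ((a+1).choose j : ℝ) * (b.choose j : ℝ))
      - 2 * ((a:ℝ) + 1) *
          ((2:ℝ)^j * (j.factorial : ℝ) * (a.choose j : ℝ) * (b.choose j : ℝ)) := by
  have p := pascal_real a j
  have r1 := choose_real1 b j
  have r2 := choose_real2 a j
  have hfac : ((j+1).factorial : ℝ) = ((j:ℝ)+1) * (j.factorial : ℝ) := by
    rw [Nat.factorial_succ]; push_cast; ring
  rw [hfac, p]
  linear_combination ((2:ℝ)^(j+1) * (j.factorial:ℝ) * ((a+1).choose j : ℝ)) * r1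
    + ((2:ℝ)^(j+1) * (j.factorial:ℝ) * (b.choose j : ℝ)) * r2

lemma herm_mul (a : ℕ) : ∀ b : ℕ, hermN a * hermN b =
    ∑ j ∈ Finset.range (a+1),
      C ((2:ℝ)^j * (j.factorial : ℝ) * (a.choose j : ℝ) * (b.choose j : ℝ)) *
        Herm ((a:ℤ) + b - 2*j) := by
  induction a using Nat.twoStepInduction with
  | zero =>
    intro b
    rw [Finset.sum_range_one]
    have h0 : hermN 0 = 1 := rfl
    rw [h0, show ((0:ℕ):ℤ) + b - 2*(0:ℕ) = ((b:ℕ):ℤ) by push_cast; ring, Herm_natCast]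
    norm_num
  | one =>
    intro b
    have h1 : hermN 1 = C 2 * X := rfl
    have hr := herm_rec (b:ℤ) (by positivity)
    rw [Herm_natCast] at hr
    rw [h1, hr]
    rw [Finset.sum_range_succ, Finset.sum_range_one]
    rw [show ((1:ℕ):ℤ) + b - 2*(0:ℕ) = (b:ℤ) + 1 by push_cast; ring,
        show ((1:ℕ):ℤ) + b - 2*(1:ℕ) = (b:ℤ) - 1 by push_cast; ring]
    norm_num
  | more a iha ihb =>
    intro b
    have idx : ∀ j : ℕ, (((a+2:ℕ):ℤ) + b - 2*((j+1:ℕ):ℤ)) = ((a:ℕ):ℤ) + b - 2*(j:ℕ) := by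
      intro j; push_cast; ring
    have hdef : hermN (a+2) * hermN b
        = C 2 * X * (hermN (a+1) * hermN b) - C (2*((a:ℝ)+1)) * (hermN a * hermN b) := by
      have h : hermN (a + 2) = C 2 * X * hermN (a + 1) - C (2 * ((a : ℝ) + 1)) * hermN a := rfl
      rw [h]; ring
    rw [hdef, ihb b, iha b, Finset.mul_sum, Finset.mul_sum]
    -- rewrite the first sum termwise using the recurrence
    have key : ∀ j ∈ Finset.range (a+2),
        C 2 * X * (C ((2:ℝ)^j * (j.factorial : ℝ) * ((a+1).choose j : ℝ) * (b.choose j : ℝ)) *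
            Herm (((a+1:ℕ):ℤ) + b - 2*j))
        = C ((2:ℝ)^j * (j.factorial : ℝ) * ((a+1).choose j : ℝ) * (b.choose j : ℝ)) *
            Herm (((a+2:ℕ):ℤ) + b - 2*j)
          + C (2*((a:ℝ)+1+(b:ℝ)-2*(j:ℝ)) *
              ((2:ℝ)^j * (j.factorial : ℝ) * ((a+1).choose j : ℝ) * (b.choose j : ℝ))) *
            Herm (((a:ℕ):ℤ) + b - 2*j) := by
      intro j hj
      simp only [Finset.mem_range] at hj
      by_cases h0 : (0:ℤ) ≤ ((a+1:ℕ):ℤ) + b - 2*j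
      · have hr := herm_rec _ h0
        have e1 : ((a+1:ℕ):ℤ) + b - 2*j + 1 = ((a+2:ℕ):ℤ) + b - 2*j := by push_cast; ring
        have e2 : ((a+1:ℕ):ℤ) + b - 2*j - 1 = ((a:ℕ):ℤ) + b - 2*j := by push_cast; ring
        rw [e1, e2] at hr
        have e3 : C (2*((a:ℝ)+1+(b:ℝ)-2*(j:ℝ)) *
              ((2:ℝ)^j * (j.factorial : ℝ) * ((a+1).choose j : ℝ) * (b.choose j : ℝ)))
            = C ((2:ℝ)^j * (j.factorial : ℝ) * ((a+1).choose j : ℝ) * (b.choose j : ℝ)) *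
              C (2 * ((((a+1:ℕ):ℤ) + b - 2*j : ℤ) : ℝ)) := by
          rw [← C_mul]; congr 1; push_cast; ring
        rw [e3]
        calc C 2 * X * (C ((2:ℝ)^j * (j.factorial : ℝ) * ((a+1).choose j : ℝ) * (b.choose j : ℝ)) *
                Herm (((a+1:ℕ):ℤ) + b - 2*j))
            = C ((2:ℝ)^j * (j.factorial : ℝ) * ((a+1).choose j : ℝ) * (b.choose j : ℝ)) *
                (C 2 * X * Herm (((a+1:ℕ):ℤ) + b - 2*j)) := by ring
          _ = _ := by rw [hr]; ring
      · have hbj : b < j := by omega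
        simp [Nat.choose_eq_zero_of_lt hbj]
    rw [Finset.sum_congr rfl key, Finset.sum_add_distrib]
    -- rewrite the second sum termwise to merge constants
    have key2 : ∀ j ∈ Finset.range (a+1),
        C (2*((a:ℝ)+1)) * (C ((2:ℝ)^j * (j.factorial : ℝ) * (a.choose j : ℝ) * (b.choose j : ℝ)) *
            Herm (((a:ℕ):ℤ) + b - 2*j))
        = C (2*((a:ℝ)+1) * ((2:ℝ)^j * (j.factorial : ℝ) * (a.choose j : ℝ) * (b.choose j : ℝ))) *
            Herm (((a:ℕ):ℤ) + b - 2*j) := by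
      intro j hj
      rw [← mul_assoc, ← C_mul]
    rw [Finset.sum_congr rfl key2]
    -- shift the first sum
    rw [Finset.sum_range_succ'
      (fun j => C ((2:ℝ)^j * (j.factorial : ℝ) * ((a+1).choose j : ℝ) * (b.choose j : ℝ)) *
        Herm (((a+2:ℕ):ℤ) + b - 2*j)) (a+1)]
    simp only [idx]
    -- shift the RHS sum
    rw [Finset.sum_range_succ'
      (fun j => C ((2:ℝ)^j * (j.factorial : ℝ) * ((a+2).choose j : ℝ) * (b.choose j : ℝ)) *
        Herm (((a+2:ℕ):ℤ) + b - 2*j)) (a+2)]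
    simp only [idx]
    -- extend the shifted first sum from range (a+1) to range (a+2)
    have ext1 : ∑ j ∈ Finset.range (a+1),
        C ((2:ℝ)^(j+1) * ((j+1).factorial : ℝ) * ((a+1).choose (j+1) : ℝ) * (b.choose (j+1) : ℝ)) *
          Herm (((a:ℕ):ℤ) + b - 2*j)
        = ∑ j ∈ Finset.range (a+2),
        C ((2:ℝ)^(j+1) * ((j+1).factorial : ℝ) * ((a+1).choose (j+1) : ℝ) * (b.choose (j+1) : ℝ)) *
          Herm (((a:ℕ):ℤ) + b - 2*j) := by
      symm
      rw [Finset.sum_range_succ]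
      simp [Nat.choose_succ_self]
    -- extend the β sum from range (a+1) to range (a+2)
    have ext2 : ∑ j ∈ Finset.range (a+1),
        C (2*((a:ℝ)+1) * ((2:ℝ)^j * (j.factorial : ℝ) * (a.choose j : ℝ) * (b.choose j : ℝ))) *
          Herm (((a:ℕ):ℤ) + b - 2*j)
        = ∑ j ∈ Finset.range (a+2),
        C (2*((a:ℝ)+1) * ((2:ℝ)^j * (j.factorial : ℝ) * (a.choose j : ℝ) * (b.choose j : ℝ))) *
          Herm (((a:ℕ):ℤ) + b - 2*j) := by
      symm
      rw [Finset.sum_range_succ]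
      simp [Nat.choose_succ_self]
    rw [ext1, ext2]
    -- now both sides: big sum + constant term
    have F0 : C ((2:ℝ)^(0:ℕ) * ((0:ℕ).factorial : ℝ) * ((a+1).choose 0 : ℝ) * (b.choose 0 : ℝ)) *
          Herm (((a+2:ℕ):ℤ) + b - 2*((0:ℕ):ℤ))
        = C ((2:ℝ)^(0:ℕ) * ((0:ℕ).factorial : ℝ) * ((a+2).choose 0 : ℝ) * (b.choose 0 : ℝ)) *
          Herm (((a+2:ℕ):ℤ) + b - 2*((0:ℕ):ℤ)) := by norm_num
    have main : ∀ j ∈ Finset.range (a+2),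
        (C ((2:ℝ)^(j+1) * ((j+1).factorial : ℝ) * ((a+1).choose (j+1) : ℝ) * (b.choose (j+1) : ℝ)) *
            Herm (((a:ℕ):ℤ) + b - 2*j)
          + C (2*((a:ℝ)+1+(b:ℝ)-2*(j:ℝ)) *
              ((2:ℝ)^j * (j.factorial : ℝ) * ((a+1).choose j : ℝ) * (b.choose j : ℝ))) *
            Herm (((a:ℕ):ℤ) + b - 2*j))
          - C (2*((a:ℝ)+1) * ((2:ℝ)^j * (j.factorial : ℝ) * (a.choose j : ℝ) * (b.choose j : ℝ))) *
            Herm (((a:ℕ):ℤ) + b - 2*j)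
        = C ((2:ℝ)^(j+1) * ((j+1).factorial : ℝ) * ((a+2).choose (j+1) : ℝ) * (b.choose (j+1) : ℝ)) *
            Herm (((a:ℕ):ℤ) + b - 2*j) := by
      intro j hj
      have hc := coef_identity a b j
      calc _ = C ((2:ℝ)^(j+1) * ((j+1).factorial : ℝ) * ((a+1).choose (j+1) : ℝ) * (b.choose (j+1) : ℝ)
            + 2*((a:ℝ)+(b:ℝ)+1-2*(j:ℝ)) *
              ((2:ℝ)^j * (j.factorial : ℝ) * ((a+1).choose j : ℝ) * (b.choose j : ℝ))
            - 2*((a:ℝ)+1) * ((2:ℝ)^j * (j.factorial : ℝ) * (a.choose j : ℝ) * (b.choose j : ℝ))) *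
            Herm (((a:ℕ):ℤ) + b - 2*j) := by
            rw [C_sub, C_add]
            have e : (2:ℝ)*((a:ℝ)+1+(b:ℝ)-2*(j:ℝ)) = 2*((a:ℝ)+(b:ℝ)+1-2*(j:ℝ)) := by ring
            rw [e]
            ring
        _ = _ := by rw [← hc]
    calc _ = (∑ j ∈ Finset.range (a+2),
          ((C ((2:ℝ)^(j+1) * ((j+1).factorial : ℝ) * ((a+1).choose (j+1) : ℝ) * (b.choose (j+1) : ℝ)) *
            Herm (((a:ℕ):ℤ) + b - 2*j)
          + C (2*((a:ℝ)+1+(b:ℝ)-2*(j:ℝ)) *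
              ((2:ℝ)^j * (j.factorial : ℝ) * ((a+1).choose j : ℝ) * (b.choose j : ℝ))) *
            Herm (((a:ℕ):ℤ) + b - 2*j))
          - C (2*((a:ℝ)+1) * ((2:ℝ)^j * (j.factorial : ℝ) * (a.choose j : ℝ) * (b.choose j : ℝ))) *
            Herm (((a:ℕ):ℤ) + b - 2*j)))
          + C ((2:ℝ)^(0:ℕ) * ((0:ℕ).factorial : ℝ) * ((a+1).choose 0 : ℝ) * (b.choose 0 : ℝ)) *
          Herm (((a+2:ℕ):ℤ) + b - 2*((0:ℕ):ℤ)) := by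
          rw [Finset.sum_sub_distrib, Finset.sum_add_distrib]
          ring
      _ = _ := by
          rw [Finset.sum_congr rfl main, F0]

/-- the operator p ↦ H_k p' - H_k' p -/
def Wpoly (k : ℕ) (p : Polynomial ℝ) : Polynomial ℝ :=
  hermN k * p.derivative - (hermN k).derivative * p

lemma Wpoly_sum (k : ℕ) (s : Finset ℕ) (f : ℕ → Polynomial ℝ) :
    Wpoly k (∑ j ∈ s, f j) = ∑ j ∈ s, Wpoly k (f j) := by
  simp [Wpoly, derivative_sum, Finset.mul_sum, ← Finset.sum_sub_distrib]

lemma Wpoly_Cmul (k : ℕ) (c : ℝ) (p : Polynomial ℝ) :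
    Wpoly k (C c * p) = C c * Wpoly k p := by
  simp only [Wpoly, derivative_C_mul]; ring

lemma Wpoly_mul (k : ℕ) (q p : Polynomial ℝ) :
    Wpoly k (q * p) = q * Wpoly k p + hermN k * q.derivative * p := by
  simp only [Wpoly, derivative_mul]; ring

lemma hermN_deriv' (a : ℕ) :
    (hermN (a+1)).derivative = C (2 * ((a:ℝ)+1)) * hermN a := by
  rw [hermN_deriv, show ((a+1:ℕ):ℤ) - 1 = ((a:ℕ):ℤ) by push_cast; ring, Herm_natCast]
  congr 1; push_cast; ring

lemma desc (N : ℕ) : ∀ j : ℕ, ((j.factorial * N.choose j : ℕ) : ℝ) = ∏ t ∈ Finset.range j, ((N:ℝ) - t) := by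
  intro j
  induction j with
  | zero => simp
  | succ i ih =>
    rw [Finset.prod_range_succ, ← ih]
    have h1 := choose_real1 N i
    push_cast [Nat.factorial_succ]
    push_cast at ih
    nlinarith [h1, ih]

lemma pochI_eq (mr : ℝ) (i : ℕ) (m : ℕ) (hmr : mr = (m:ℝ)) :
    pochI (mr + 2 - ((i+1:ℕ):ℝ)) (((i+1:ℕ):ℤ) - 1) = ∏ t ∈ Finset.range i, ((m:ℝ) - t) := by
  subst hmr
  rw [pochI, if_neg (by omega), show ((((i+1:ℕ):ℤ) - 1)).toNat = i by omega]
  rw [← Finset.prod_range_reflect (fun t => (m:ℝ) - t) i]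
  apply Finset.prod_congr rfl
  intro t ht
  simp only [Finset.mem_range] at ht
  push_cast [Nat.cast_sub (by omega : t ≤ i - 1), Nat.cast_sub (by omega : 1 ≤ i)]
  ring

lemma scalar_id (k m j : ℕ) :
    ((m:ℝ) - k) * ((2:ℝ)^j * (((k+1).choose j) : ℝ) * pochI ((m:ℝ)+2-(j:ℝ)) ((j:ℤ)-1))
    = (2:ℝ)^j * (j.factorial : ℝ) * (((k+1).choose j) : ℝ) * ((m.choose j) : ℝ)
      - ((k:ℝ)+1)/((m:ℝ)+1) *
        ((2:ℝ)^j * (j.factorial : ℝ) * ((k.choose j) : ℝ) * (((m+1).choose j) : ℝ)) := by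
  have hm1 : (m:ℝ) + 1 ≠ 0 := by positivity
  cases j with
  | zero =>
    have e : pochI ((m:ℝ)+2-((0:ℕ):ℝ)) (((0:ℕ):ℤ)-1) = 1/((m:ℝ)+1) := by
      rw [pochI, if_pos (by norm_num)]
      norm_num
      ring
    rw [e]
    simp only [Nat.choose_zero_right, Nat.factorial_zero, Nat.cast_one, pow_zero]
    field_simp
    ring
  | succ i =>
    have hP : pochI ((m:ℝ)+2-((i+1:ℕ):ℝ)) (((i+1:ℕ):ℤ)-1) = ∏ t ∈ Finset.range i, ((m:ℝ) - t) :=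
      pochI_eq _ i m rfl
    have h1 : (((i+1).factorial * m.choose (i+1) : ℕ) : ℝ)
        = ((m:ℝ) - i) * ∏ t ∈ Finset.range i, ((m:ℝ) - t) := by
      rw [desc m (i+1), Finset.prod_range_succ]; ring
    have h2 : (((i+1).factorial * (m+1).choose (i+1) : ℕ) : ℝ)
        = ((m:ℝ) + 1) * ∏ t ∈ Finset.range i, ((m:ℝ) - t) := by
      rw [desc (m+1) (i+1), Finset.prod_range_succ' (fun t => ((m+1:ℕ):ℝ) - t) i]
      have : ∀ t ∈ Finset.range i, ((m+1:ℕ):ℝ) - ((t+1:ℕ):ℝ) = (m:ℝ) - t := by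
        intro t ht; push_cast; ring
      rw [Finset.prod_congr rfl this]
      push_cast; ring
    have hr2 := choose_real2 k (i+1)
    push_cast at hP h1 h2 hr2 ⊢
    rw [hP]
    field_simp
    linear_combination (((m:ℝ)+1) * -1 * (((k+1).choose (i+1) : ℕ):ℝ)) * h1
      + (((k:ℝ)-(i:ℝ)) * 1 * (((k+1).choose (i+1) : ℕ):ℝ)) * h2
      + (1 * (((i+1).factorial : ℕ):ℝ) * ((((m+1).choose (i+1)) : ℕ):ℝ)) * hr2

lemma poly_main (k m : ℕ) :
    hermN (k+1) * Wpoly k (hermN m) =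
      C ((m:ℝ) - k) * ∑ j ∈ Finset.range (k+2),
        C ((2:ℝ)^j * (((k+1).choose j) : ℝ) * pochI ((m:ℝ)+2-(j:ℝ)) ((j:ℤ)-1)) *
          Wpoly k (Herm ((m:ℤ)+(k:ℤ)+1-2*(j:ℤ))) := by
  have hm1 : (m:ℝ) + 1 ≠ 0 := by positivity
  have idx1 : ∀ j : ℕ, ((k+1:ℕ):ℤ) + (m:ℕ) - 2*(j:ℕ) = (m:ℤ)+(k:ℤ)+1-2*(j:ℤ) := by
    intro j; push_cast; ring
  have idx2 : ∀ j : ℕ, ((k:ℕ):ℤ) + ((m+1:ℕ):ℕ) - 2*(j:ℕ) = (m:ℤ)+(k:ℤ)+1-2*(j:ℤ) := by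
    intro j; push_cast; ring
  -- expand the two products
  have eA : Wpoly k (hermN (k+1) * hermN m)
      = ∑ j ∈ Finset.range (k+2),
          C ((2:ℝ)^j * (j.factorial : ℝ) * (((k+1).choose j) : ℝ) * ((m.choose j) : ℝ)) *
            Wpoly k (Herm ((m:ℤ)+(k:ℤ)+1-2*(j:ℤ))) := by
    rw [herm_mul (k+1) m, Wpoly_sum]
    refine Finset.sum_congr rfl (fun j _ => ?_)
    rw [Wpoly_Cmul, idx1]
  have eB : Wpoly k (hermN k * hermN (m+1))
      = ∑ j ∈ Finset.range (k+2),
          C ((2:ℝ)^j * (j.factorial : ℝ) * ((k.choose j) : ℝ) * (((m+1).choose j) : ℝ)) *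
            Wpoly k (Herm ((m:ℤ)+(k:ℤ)+1-2*(j:ℤ))) := by
    rw [herm_mul k (m+1), Wpoly_sum]
    symm
    rw [show k+2 = (k+1)+1 from rfl, Finset.sum_range_succ]
    simp only [Nat.choose_succ_self, Nat.cast_zero, mul_zero, zero_mul, map_zero, add_zero]
    refine Finset.sum_congr rfl (fun j _ => ?_)
    rw [Wpoly_Cmul, idx2]
  -- product rules
  have hk1 : (hermN (k+1)).derivative = C (2 * ((k:ℝ)+1)) * hermN k := hermN_deriv' k
  have hm1' : (hermN (m+1)).derivative = C (2 * ((m:ℝ)+1)) * hermN m := hermN_deriv' m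
  have e1 : Wpoly k (hermN (k+1) * hermN m)
      = hermN (k+1) * Wpoly k (hermN m) + C (2*((k:ℝ)+1)) * (hermN k * (hermN k * hermN m)) := by
    rw [Wpoly_mul, hk1]; ring
  have e2 : Wpoly k (hermN k * hermN (m+1))
      = C (2*((m:ℝ)+1)) * (hermN k * (hermN k * hermN m)) := by
    show hermN k * (hermN k * hermN (m+1)).derivative
        - (hermN k).derivative * (hermN k * hermN (m+1)) = _
    rw [derivative_mul, hm1']
    ring
  -- combine
  have combine : C ((m:ℝ) - k) * (∑ j ∈ Finset.range (k+2),
        C ((2:ℝ)^j * (((k+1).choose j) : ℝ) * pochI ((m:ℝ)+2-(j:ℝ)) ((j:ℤ)-1)) *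
          Wpoly k (Herm ((m:ℤ)+(k:ℤ)+1-2*(j:ℤ))))
      = Wpoly k (hermN (k+1) * hermN m)
        - C (((k:ℝ)+1)/((m:ℝ)+1)) * Wpoly k (hermN k * hermN (m+1)) := by
    rw [eA, eB, Finset.mul_sum, Finset.mul_sum, ← Finset.sum_sub_distrib]
    refine Finset.sum_congr rfl (fun j _ => ?_)
    have hs : C ((m:ℝ)-(k:ℝ)) * C ((2:ℝ)^j * (((k+1).choose j):ℝ) * pochI ((m:ℝ)+2-(j:ℝ)) ((j:ℤ)-1))
        = C ((2:ℝ)^j * (j.factorial:ℝ) * (((k+1).choose j):ℝ) * ((m.choose j):ℝ))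
          - C (((k:ℝ)+1)/((m:ℝ)+1)) * C ((2:ℝ)^j * (j.factorial:ℝ) * ((k.choose j):ℝ) * (((m+1).choose j):ℝ)) := by
      rw [← C_mul, ← C_mul, ← C_sub]
      exact congrArg C (scalar_id k m j)
    linear_combination (Wpoly k (Herm ((m:ℤ)+(k:ℤ)+1-2*(j:ℤ)))) * hs
  rw [combine, e1, e2]
  rw [show C (((k:ℝ)+1)/((m:ℝ)+1)) * (C (2*((m:ℝ)+1)) * (hermN k * (hermN k * hermN m)))
      = C (((k:ℝ)+1)/((m:ℝ)+1) * (2*((m:ℝ)+1))) * (hermN k * (hermN k * hermN m)) by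
    rw [← mul_assoc, ← C_mul]]
  rw [show ((k:ℝ)+1)/((m:ℝ)+1) * (2*((m:ℝ)+1)) = 2*((k:ℝ)+1) by field_simp]
  ring

lemma hh1_eval (k : ℕ) (n : ℤ) (x : ℝ) :
    hh1 k n x = (Wpoly k (Herm (n - k + 1))).eval x := by
  have hd : ∀ (s : ℤ) (y : ℝ), deriv (H s) y = ((Herm s).derivative).eval y := by
    intro s y
    exact Polynomial.deriv (Herm s)
  simp only [hh1, Wr, Matrix.det_fin_two, Matrix.of_apply]
  simp only [Fin.isValue, Fin.val_zero, Fin.val_one, iteratedDeriv_zero, iteratedDeriv_one,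
    Matrix.cons_val_zero, Matrix.cons_val_one, Matrix.head_cons]
  simp only [hd, Wpoly, eval_sub, eval_mul, H, Herm_natCast]

/-- One-step recurrence relation for the exceptional Hermite polynomials. -/
theorem stmt_17 (k : ℕ) (hk : 1 ≤ k)
    (n : ℤ) (hn : (k : ℤ) - 1 ≤ n) (hne : n ≠ 2 * k - 1) (x : ℝ) :
    H ((k : ℤ) + 1) x * hh1 k n x =
      ((n : ℝ) - 2 * k + 1) * ∑ j ∈ Finset.range (k + 2),
        2 ^ j * (Nat.choose (k + 1) j : ℝ) *
          pochI ((n : ℝ) + 3 - k - j) ((j : ℤ) - 1) *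
          hh1 k (n + k + 1 - 2 * j) x := by
  set m : ℕ := (n - k + 1).toNat with hm
  have hmZ : (m : ℤ) = n - k + 1 := Int.toNat_of_nonneg (by omega)
  have hmR : (m : ℝ) = (n : ℝ) - k + 1 := by
    exact_mod_cast congrArg (fun z : ℤ => (z : ℝ)) hmZ
  have hH : H ((k:ℤ)+1) x = (hermN (k+1)).eval x := by
    rw [H, show (k:ℤ)+1 = ((k+1:ℕ):ℤ) by push_cast; ring, Herm_natCast]
  have hmain := congrArg (Polynomial.eval x) (poly_main k m)
  rw [eval_mul, eval_mul, eval_C, Polynomial.eval_finset_sum] at hmain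
  rw [hH, hh1_eval, show n - k + 1 = (m:ℤ) by omega, Herm_natCast, hmain]
  rw [show (m:ℝ) - k = (n:ℝ) - 2*k + 1 by rw [hmR]; ring]
  congr 1
  refine Finset.sum_congr rfl (fun j _ => ?_)
  rw [eval_mul, eval_C, hh1_eval, show n + k + 1 - 2*j - k + 1 = (m:ℤ)+(k:ℤ)+1-2*(j:ℤ) by omega]
  rw [show (n:ℝ) + 3 - k - j = (m:ℝ) + 2 - j by rw [hmR]; ring]

end
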